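/- arXiv:1409.1167 — 3 statements merged into one kernel-verified Lean document; each statement's English description precedes it below -/
import Mathlib

section
/- Let H be a real Hilbert space and V ⊆ H a (closed) subspace. Let F : H → ℝ be Fréchet differentiable with derivative F'(x) ∈ H* at each x ∈ H. Assume: (i) there is a constant α > 0 such that (F'(x) − F'(y))(x − y) ≥ α·‖x − y‖² for all x, y ∈ H (strong convexity coming from the Tikhonov regularization term with regularization parameter α); (ii) there is a constant D > 0 such that ‖F'(x) − F'(y)‖ ≤ D·‖x − y‖ for all x, y ∈ H; (iii) ε_r ∈ H satisfies F'(ε_r) = 0 (ε_r is the regularized solution); (iv) ε_h ∈ V satisfies the Galerkin orthogonality F'(ε_h)(v) = 0 for all v ∈ V; (v) ε_I ∈ V (an interpolant of ε_r in V). Then ‖ε_h − ε_r‖ ≤ (D/α)·‖ε_r − ε_I‖. (This is the abstract content of the paper's a posteriori error estimate theorem for the regularized solution: combined with the finite element interpolation estimate ‖ε_r − ε_I‖ ≤ C_I‖h ε_h‖ it yields ‖ε_h − ε_r‖_{L²(Ω)} ≤ (D/α) C_I ‖h ε_h‖_{L²(Ω)}.) -/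
/-- A posteriori error estimate for the regularized solution of the Tikhonov
functional: if `F'` is strongly monotone with constant `α` and Lipschitz with
constant `D`, `ε_r` is a critical point of `F`, and `ε_h ∈ V` satisfies the
Galerkin orthogonality, then `‖ε_h − ε_r‖ ≤ (D/α)·‖ε_r − ε_I‖` for any
interpolant `ε_I ∈ V` of `ε_r`. -/
theorem regularized_solution_aposteriori_estimate
    {H : Type*} [NormedAddCommGroup H] [InnerProductSpace ℝ H] [CompleteSpace H]
    (V : Submodule ℝ H) (hVclosed : IsClosed (V : Set H))
    (F : H → ℝ) (F' : H → (H →L[ℝ] ℝ))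
    (hF : ∀ x : H, HasFDerivAt F (F' x) x)
    (α : ℝ) (hα : 0 < α)
    (hmono : ∀ x y : H, (F' x - F' y) (x - y) ≥ α * ‖x - y‖ ^ 2)
    (D : ℝ) (hD : 0 < D)
    (hLip : ∀ x y : H, ‖F' x - F' y‖ ≤ D * ‖x - y‖)
    (ε_r ε_h ε_I : H)
    (hcrit : F' ε_r = 0)
    (hεh : ε_h ∈ V)
    (hGal : ∀ v ∈ V, F' ε_h v = 0)
    (hεI : ε_I ∈ V) :
    ‖ε_h - ε_r‖ ≤ (D / α) * ‖ε_r - ε_I‖ := by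
  have key : α * ‖ε_h - ε_r‖ ^ 2 ≤ D * ‖ε_h - ε_r‖ * ‖ε_r - ε_I‖ := by
    have h1 : α * ‖ε_h - ε_r‖ ^ 2 ≤ (F' ε_h - F' ε_r) (ε_h - ε_r) := hmono ε_h ε_r
    have h2 : (F' ε_h - F' ε_r) (ε_h - ε_r) = (F' ε_h - F' ε_r) (ε_I - ε_r) := by
      simp only [ContinuousLinearMap.sub_apply, hcrit, ContinuousLinearMap.zero_apply,
        sub_zero]
      have := hGal (ε_h - ε_I) (V.sub_mem hεh hεI)
      have := map_sub (F' ε_h) ε_h ε_I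
      have h3 : F' ε_h ε_h = F' ε_h ε_I := by
        have h4 := hGal (ε_h - ε_I) (V.sub_mem hεh hεI)
        rw [map_sub] at h4; linarith
      rw [map_sub, map_sub, h3]
    have h5 : (F' ε_h - F' ε_r) (ε_I - ε_r) ≤ D * ‖ε_h - ε_r‖ * ‖ε_r - ε_I‖ := by
      calc (F' ε_h - F' ε_r) (ε_I - ε_r) ≤ ‖F' ε_h - F' ε_r‖ * ‖ε_I - ε_r‖ :=
            le_trans (le_abs_self _) ((F' ε_h - F' ε_r).le_opNorm _)
        _ ≤ D * ‖ε_h - ε_r‖ * ‖ε_I - ε_r‖ :=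
            mul_le_mul_of_nonneg_right (hLip ε_h ε_r) (norm_nonneg _)
        _ = D * ‖ε_h - ε_r‖ * ‖ε_r - ε_I‖ := by rw [norm_sub_rev ε_I ε_r]
    linarith
  rcases eq_or_ne (‖ε_h - ε_r‖) 0 with h | h
  · rw [h]; positivity
  · have hpos : 0 < ‖ε_h - ε_r‖ := lt_of_le_of_ne (norm_nonneg _) (Ne.symm h)
    rw [div_mul_eq_mul_div, le_div_iff₀ hα]
    nlinarith
end

section
/- Let U ⊆ ℝ³ (Euclidean space) be an open set, let s̲ < s̄ be positive reals, let V : U → ℝ be twice continuously differentiable, let ε : U → ℝ, and let q : U × [s̲, s̄] → ℝ be such that q and its first and second spatial partial derivatives exist, are jointly continuous on U × [s̲, s̄], and are continuously differentiable in s. Define v(x, s) := −∫ₛ^{s̄} q(x, τ) dτ + V(x). Suppose that for every x ∈ U and every s ∈ (s̲, s̄], Δₓv(x, s) + s²·‖∇ₓv(x, s)‖² = ε(x), where ε does not depend on s. Then for every x ∈ U and s ∈ (s̲, s̄), q satisfies the nonlinear integro-differential equation: Δₓq(x, s) − 2s²·∇ₓq(x, s)·∫ₛ^{s̄} ∇ₓq(x,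 τ) dτ + 2s²·∇V(x)·∇ₓq(x, s) + 2s·‖∫ₛ^{s̄} ∇ₓq(x, τ) dτ‖² − 4s·∇V(x)·∫ₛ^{s̄} ∇ₓq(x, τ) dτ + 2s·‖∇V(x)‖² = 0. -/
open RealInnerProductSpace

/-- The spatial Laplacian of a function on `ℝ³`: the sum of its second partial
derivatives. -/
noncomputable def spatialLaplacian (f : EuclideanSpace ℝ (Fin 3) → ℝ)
    (x : EuclideanSpace ℝ (Fin 3)) : ℝ :=
  ∑ i : Fin 3,
    fderiv ℝ (fun y => fderiv ℝ f y (EuclideanSpace.single i 1)) x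
      (EuclideanSpace.single i 1)

open MeasureTheory

section helpers

variable {H : Type*} [NormedAddCommGroup H] [NormedSpace ℝ H] [ProperSpace H]
variable {B : Type*} [NormedAddCommGroup B] [NormedSpace ℝ B] [CompleteSpace B]

lemma hasFDerivAt_intervalIntegral_param
    (U : Set H) (hU : IsOpen U) {x₀ : H} (hx₀ : x₀ ∈ U)
    (sl sb : ℝ) {a : ℝ} (hsla : sl ≤ a) (hasb : a ≤ sb)
    (f : H → ℝ → B) (f' : H → ℝ → H →L[ℝ] B)
    (hdiff : ∀ τ ∈ Set.Icc sl sb, ∀ y ∈ U, HasFDerivAt (fun z => f z τ) (f' y τ) y)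
    (hcont' : ContinuousOn (fun p : H × ℝ => f' p.1 p.2) (U ×ˢ Set.Icc sl sb))
    (hcont : ∀ y ∈ U, ContinuousOn (fun τ => f y τ) (Set.Icc sl sb)) :
    HasFDerivAt (fun y => ∫ τ in a..sb, f y τ) (∫ τ in a..sb, f' x₀ τ) x₀ := by
  obtain ⟨r0, hr0, hball⟩ := Metric.isOpen_iff.mp hU x₀ hx₀
  set r := r0 / 2 with hr
  have hrpos : 0 < r := by positivity
  have hcb : Metric.closedBall x₀ r ⊆ U :=
    (Metric.closedBall_subset_ball (by simp [hr]; linarith)).trans hball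
  have hsub : Set.uIoc a sb ⊆ Set.Icc sl sb := by
    rw [Set.uIoc_of_le hasb]
    exact (Set.Ioc_subset_Icc_self).trans (Set.Icc_subset_Icc hsla le_rfl)
  have hcompact : IsCompact (Metric.closedBall x₀ r ×ˢ Set.Icc sl sb) :=
    (isCompact_closedBall x₀ r).prod isCompact_Icc
  obtain ⟨M, hM⟩ := hcompact.exists_bound_of_continuousOn
    (hcont'.mono (Set.prod_mono hcb le_rfl))
  refine intervalIntegral.hasFDerivAt_integral_of_dominated_of_fderiv_le
    (F := f) (F' := f') (bound := fun _ => M) (Metric.ball_mem_nhds x₀ hrpos) ?_ ?_ ?_ ?_ ?_ ?_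
  · filter_upwards [hU.mem_nhds hx₀] with y hy
    exact ((hcont y hy).mono hsub).aestronglyMeasurable measurableSet_uIoc
  · refine ((hcont x₀ hx₀).mono ?_).intervalIntegrable
    rw [Set.uIcc_of_le hasb]
    exact Set.Icc_subset_Icc hsla le_rfl
  · have hc : ContinuousOn (fun τ => f' x₀ τ) (Set.Icc sl sb) :=
      hcont'.comp (Continuous.prodMk_right x₀).continuousOn (fun τ hτ => ⟨hx₀, hτ⟩)
    haveI : SecondCountableTopologyEither ℝ (H →L[ℝ] B) :=
      secondCountableTopologyEither_of_left ℝ _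
    exact (hc.mono hsub).aestronglyMeasurable measurableSet_uIoc
  · refine Filter.Eventually.of_forall fun t ht y hy => hM (y, t) ?_
    exact ⟨Metric.ball_subset_closedBall hy, hsub ht⟩
  · exact intervalIntegrable_const
  · refine Filter.Eventually.of_forall fun t ht y hy => ?_
    exact hdiff t (hsub ht) y (hcb (Metric.ball_subset_closedBall hy))

lemma hasFDerivAt_fderiv {F : Type*} [NormedAddCommGroup F] [NormedSpace ℝ F]
    {U : Set H} (hU : IsOpen U) {f : H → F} (hf : ContDiffOn ℝ 2 f U) {x : H} (hx : x ∈ U) :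
    HasFDerivAt (fun y => fderiv ℝ f y) (fderiv ℝ (fun y => fderiv ℝ f y) x) x := by
  have h2 : ContDiffOn ℝ (1 + 1) f U := by
    convert hf using 2
    norm_num
  rw [contDiffOn_succ_iff_fderiv_of_isOpen hU] at h2
  exact ((h2.2.2.differentiableOn one_ne_zero).differentiableAt (hU.mem_nhds hx)).hasFDerivAt

lemma gradient_def' {F : Type*} [NormedAddCommGroup F] [InnerProductSpace ℝ F]
    [CompleteSpace F] (f : F → ℝ) (x : F) :
    gradient f x = (InnerProductSpace.toDual ℝ F).symm (fderiv ℝ f x) := rfl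

lemma laplacian_eq {f : EuclideanSpace ℝ (Fin 3) → ℝ} {x : EuclideanSpace ℝ (Fin 3)}
    {Φ : EuclideanSpace ℝ (Fin 3) →L[ℝ] EuclideanSpace ℝ (Fin 3) →L[ℝ] ℝ}
    (h : HasFDerivAt (fun y => fderiv ℝ f y) Φ x) :
    spatialLaplacian f x
      = ∑ i : Fin 3, Φ (EuclideanSpace.single i 1) (EuclideanSpace.single i 1) := by
  unfold spatialLaplacian
  refine Finset.sum_congr rfl fun i _ => ?_
  have h' := (ContinuousLinearMap.apply ℝ ℝ
      (EuclideanSpace.single i 1)).hasFDerivAt.comp x h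
  exact congrFun (congrArg DFunLike.coe h'.fderiv) _

end helpers

/-- The paper's integro-differential equation (eq:q) for `q` and the tail function `V`:
if `v(x,s) := −∫ₛ^{s̄} q(x,τ) dτ + V(x)` satisfies `Δₓv + s²‖∇ₓv‖² = ε(x)` with `ε`
independent of `s`, then
`Δₓq − 2s²∇ₓq·∫ₛ^{s̄}∇ₓq dτ + 2s²∇V·∇ₓq + 2s‖∫ₛ^{s̄}∇ₓq dτ‖² − 4s∇V·∫ₛ^{s̄}∇ₓq dτ + 2s‖∇V‖² = 0`. -/
theorem integro_differential_equation_for_q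
    (U : Set (EuclideanSpace ℝ (Fin 3))) (hU : IsOpen U)
    (sl sb : ℝ) (hsl : 0 < sl) (hslsb : sl < sb)
    (V : EuclideanSpace ℝ (Fin 3) → ℝ) (hV : ContDiffOn ℝ 2 V U)
    (ε : EuclideanSpace ℝ (Fin 3) → ℝ)
    (q : EuclideanSpace ℝ (Fin 3) → ℝ → ℝ)
    -- q is twice continuously differentiable in the spatial variable
    (hq_space : ∀ s ∈ Set.Icc sl sb, ContDiffOn ℝ 2 (fun x => q x s) U)
    -- q and its first and second spatial derivatives are jointly continuous
    (hq_cont : ContinuousOn (fun p : EuclideanSpace ℝ (Fin 3) × ℝ => q p.1 p.2)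
      (U ×ˢ Set.Icc sl sb))
    (hq_cont1 : ContinuousOn
      (fun p : EuclideanSpace ℝ (Fin 3) × ℝ => fderiv ℝ (fun y => q y p.2) p.1)
      (U ×ˢ Set.Icc sl sb))
    (hq_cont2 : ContinuousOn
      (fun p : EuclideanSpace ℝ (Fin 3) × ℝ =>
        fderiv ℝ (fun y => fderiv ℝ (fun z => q z p.2) y) p.1)
      (U ×ˢ Set.Icc sl sb))
    -- q and its first and second spatial derivatives are C¹ in the pseudo frequency s
    (hq_s0 : ∀ x ∈ U, ContDiffOn ℝ 1 (fun t => q x t) (Set.Icc sl sb))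
    (hq_s1 : ∀ x ∈ U,
      ContDiffOn ℝ 1 (fun t => fderiv ℝ (fun y => q y t) x) (Set.Icc sl sb))
    (hq_s2 : ∀ x ∈ U,
      ContDiffOn ℝ 1
        (fun t => fderiv ℝ (fun y => fderiv ℝ (fun z => q z t) y) x) (Set.Icc sl sb))
    (v : EuclideanSpace ℝ (Fin 3) → ℝ → ℝ)
    (hv : ∀ x s, v x s = -(∫ τ in s..sb, q x τ) + V x)
    (heq : ∀ x ∈ U, ∀ s ∈ Set.Ioc sl sb,
      spatialLaplacian (fun y => v y s) x
        + s ^ 2 * ‖gradient (fun y => v y s) x‖ ^ 2 = ε x) :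
    ∀ x ∈ U, ∀ s ∈ Set.Ioo sl sb,
      spatialLaplacian (fun y => q y s) x
        - 2 * s ^ 2 * ⟪gradient (fun y => q y s) x,
            ∫ τ in s..sb, gradient (fun y => q y τ) x⟫
        + 2 * s ^ 2 * ⟪gradient V x, gradient (fun y => q y s) x⟫
        + 2 * s * ‖∫ τ in s..sb, gradient (fun y => q y τ) x‖ ^ 2
        - 4 * s * ⟪gradient V x, ∫ τ in s..sb, gradient (fun y => q y τ) x⟫
        + 2 * s * ‖gradient V x‖ ^ 2 = 0 := by
  intro x hx s hs
  classical
  have hq1 : ∀ τ ∈ Set.Icc sl sb, ∀ y ∈ U,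
      HasFDerivAt (fun z => q z τ) (fderiv ℝ (fun z => q z τ) y) y := fun τ hτ y hy =>
    (((hq_space τ hτ).differentiableOn two_ne_zero).differentiableAt
      (hU.mem_nhds hy)).hasFDerivAt
  have hq2 : ∀ τ ∈ Set.Icc sl sb, ∀ y ∈ U,
      HasFDerivAt (fun z => fderiv ℝ (fun w => q w τ) z)
        (fderiv ℝ (fun z => fderiv ℝ (fun w => q w τ) z) y) y := fun τ hτ y hy =>
    hasFDerivAt_fderiv hU (hq_space τ hτ) hy
  have hVd : ∀ y ∈ U, HasFDerivAt V (fderiv ℝ V y) y := fun y hy =>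
    ((hV.differentiableOn two_ne_zero).differentiableAt (hU.mem_nhds hy)).hasFDerivAt
  have hV2 : HasFDerivAt (fun y => fderiv ℝ V y) (fderiv ℝ (fun y => fderiv ℝ V y) x) x :=
    hasFDerivAt_fderiv hU hV hx
  have hIa : ∀ a, sl ≤ a → a ≤ sb → ∀ y, y ∈ U →
      HasFDerivAt (fun z => ∫ τ in a..sb, q z τ)
        (∫ τ in a..sb, fderiv ℝ (fun w => q w τ) y) y := fun a h1 h2 y hy =>
    hasFDerivAt_intervalIntegral_param U hU hy sl sb h1 h2 _ _ hq1 hq_cont1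
      (fun z hz => (hq_s0 z hz).continuousOn)
  have hIb : ∀ a, sl ≤ a → a ≤ sb →
      HasFDerivAt (fun z => ∫ τ in a..sb, fderiv ℝ (fun w => q w τ) z)
        (∫ τ in a..sb, fderiv ℝ (fun z => fderiv ℝ (fun w => q w τ) z) x) x :=
    fun a h1 h2 =>
    hasFDerivAt_intervalIntegral_param U hU hx sl sb h1 h2 _ _ hq2 hq_cont2
      (fun z hz => (hq_s1 z hz).continuousOn)
  have hvd : ∀ a, sl ≤ a → a ≤ sb → ∀ y, y ∈ U →
      HasFDerivAt (fun z => v z a)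
        (-(∫ τ in a..sb, fderiv ℝ (fun w => q w τ) y) + fderiv ℝ V y) y := by
    intro a h1 h2 y hy
    have h := ((hIa a h1 h2 y hy).neg).add (hVd y hy)
    have hfe : (fun z => v z a) = fun z => -(∫ τ in a..sb, q z τ) + V z :=
      funext fun z => hv z a
    rw [hfe]; exact h
  -- the gradient of v
  have hgradv : ∀ a, sl ≤ a → a ≤ sb →
      gradient (fun z => v z a) x
        = -(∫ τ in a..sb, gradient (fun w => q w τ) x) + gradient V x := by
    intro a h1 h2
    have hswap : (InnerProductSpace.toDual ℝ (EuclideanSpace ℝ (Fin 3))).symm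
        (∫ τ in a..sb, fderiv ℝ (fun w => q w τ) x)
        = ∫ τ in a..sb, gradient (fun w => q w τ) x := by
      rw [intervalIntegral.integral_of_le h2, intervalIntegral.integral_of_le h2]
      exact (((InnerProductSpace.toDual ℝ
        (EuclideanSpace ℝ (Fin 3))).symm.toLinearIsometry).integral_comp_comm _).symm
    rw [gradient_def', (hvd a h1 h2 x hx).fderiv, map_add, map_neg, hswap]
    rfl
  -- the spatialLaplacian of v
  set e : Fin 3 → EuclideanSpace ℝ (Fin 3) := fun i => EuclideanSpace.single i 1 with he
  set hessV := fderiv ℝ (fun y => fderiv ℝ V y) x with hhessV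
  have hLapV : spatialLaplacian V x = ∑ i, hessV (e i) (e i) := laplacian_eq hV2
  set D2 : ℝ → _ := fun τ => fderiv ℝ (fun z => fderiv ℝ (fun w => q w τ) z) x with hD2
  have hD2cont : ContinuousOn D2 (Set.Icc sl sb) := (hq_s2 x hx).continuousOn
  set ℓ : ℝ → ℝ := fun τ => ∑ i, D2 τ (e i) (e i) with hℓdef
  have hℓlap : ∀ τ ∈ Set.Icc sl sb, spatialLaplacian (fun w => q w τ) x = ℓ τ := fun τ hτ =>
    laplacian_eq (hq2 τ hτ x hx)
  have happly_cont : ∀ i, Continuous fun (A : EuclideanSpace ℝ (Fin 3) →L[ℝ]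
      EuclideanSpace ℝ (Fin 3) →L[ℝ] ℝ) => A (e i) (e i) := fun i =>
    (ContinuousLinearMap.apply ℝ ℝ (e i)).continuous.comp
      (ContinuousLinearMap.apply ℝ (EuclideanSpace ℝ (Fin 3) →L[ℝ] ℝ) (e i)).continuous
  have hℓcont : ContinuousOn ℓ (Set.Icc sl sb) :=
    continuousOn_finset_sum _ fun i _ => (happly_cont i).comp_continuousOn hD2cont
  have hlapv : ∀ a, sl ≤ a → a ≤ sb →
      spatialLaplacian (fun z => v z a) x = -(∫ τ in a..sb, ℓ τ) + spatialLaplacian V x := by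
    intro a h1 h2
    have hg : HasFDerivAt
        (fun y => -(∫ τ in a..sb, fderiv ℝ (fun w => q w τ) y) + fderiv ℝ V y)
        (-(∫ τ in a..sb, D2 τ) + hessV) x := ((hIb a h1 h2).neg).add hV2
    have hvv : HasFDerivAt (fun y => fderiv ℝ (fun z => v z a) y)
        (-(∫ τ in a..sb, D2 τ) + hessV) x := by
      refine hg.congr_of_eventuallyEq ?_
      filter_upwards [hU.mem_nhds hx] with y hy
      exact (hvd a h1 h2 y hy).fderiv
    rw [laplacian_eq hvv]
    letI : ContinuousENorm (EuclideanSpace ℝ (Fin 3) →L[ℝ] EuclideanSpace ℝ (Fin 3) →L[ℝ] ℝ) :=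
      @SeminormedAddGroup.toContinuousENorm
        (EuclideanSpace ℝ (Fin 3) →L[ℝ] EuclideanSpace ℝ (Fin 3) →L[ℝ] ℝ) _
    have hIntD2 : MeasureTheory.IntegrableOn D2 (Set.Ioc a sb) MeasureTheory.volume :=
      ((ContinuousOn.integrableOn_Icc
        (E := EuclideanSpace ℝ (Fin 3) →L[ℝ] EuclideanSpace ℝ (Fin 3) →L[ℝ] ℝ)
        (hD2cont.mono (Set.Icc_subset_Icc h1 le_rfl)))).mono_set
        Set.Ioc_subset_Icc_self
    have happ : ∀ i, (∫ τ in a..sb, D2 τ) (e i) (e i) = ∫ τ in a..sb, D2 τ (e i) (e i) := by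
      intro i
      rw [intervalIntegral.integral_of_le h2, intervalIntegral.integral_of_le h2,
        ContinuousLinearMap.integral_apply hIntD2, ContinuousLinearMap.integral_apply
          (hIntD2.apply_continuousLinearMap _)]
    have hIi : ∀ i : Fin 3, IntervalIntegrable (fun τ => D2 τ (e i) (e i))
        MeasureTheory.volume a sb := by
      intro i
      refine (((happly_cont i).comp_continuousOn hD2cont).mono ?_).intervalIntegrable
      rw [Set.uIcc_of_le h2]
      exact Set.Icc_subset_Icc h1 le_rfl
    calc ∑ i, (-(∫ τ in a..sb, D2 τ) + hessV) (e i) (e i)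
        = ∑ i, (-(∫ τ in a..sb, D2 τ (e i) (e i)) + hessV (e i) (e i)) := by
          refine Finset.sum_congr rfl fun i _ => ?_
          simp only [ContinuousLinearMap.add_apply, ContinuousLinearMap.neg_apply]
          rw [happ i]
      _ = -(∑ i, ∫ τ in a..sb, D2 τ (e i) (e i)) + ∑ i, hessV (e i) (e i) := by
          rw [Finset.sum_add_distrib, Finset.sum_neg_distrib]
      _ = -(∫ τ in a..sb, ℓ τ) + spatialLaplacian V x := by
          rw [hLapV]
          simp only [hℓdef]
          rw [intervalIntegral.integral_finset_sum fun i _ => hIi i]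
  -- continuity in the pseudo-frequency of the gradient
  set G : ℝ → EuclideanSpace ℝ (Fin 3) := fun τ => gradient (fun w => q w τ) x with hG
  have hGcont : ContinuousOn G (Set.Icc sl sb) :=
    (InnerProductSpace.toDual ℝ (EuclideanSpace ℝ (Fin 3))).symm.continuous.comp_continuousOn
      (hq_s1 x hx).continuousOn
  have hsmem : s ∈ Set.Icc sl sb := ⟨hs.1.le, hs.2.le⟩
  -- FTC
  have hA : HasDerivAt (fun a => ∫ τ in a..sb, ℓ τ) (-ℓ s) s := by
    refine intervalIntegral.integral_hasDerivAt_left ?_ ?_ ?_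
    · refine (hℓcont.mono ?_).intervalIntegrable
      rw [Set.uIcc_of_le hs.2.le]
      exact Set.Icc_subset_Icc hs.1.le le_rfl
    · exact ContinuousOn.stronglyMeasurableAtFilter isOpen_Ioo
        (hℓcont.mono Set.Ioo_subset_Icc_self) s hs
    · exact hℓcont.continuousAt (Icc_mem_nhds hs.1 hs.2)
  have hB : HasDerivAt (fun a => ∫ τ in a..sb, G τ) (-G s) s := by
    refine intervalIntegral.integral_hasDerivAt_left ?_ ?_ ?_
    · refine (hGcont.mono ?_).intervalIntegrable
      rw [Set.uIcc_of_le hs.2.le]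
      exact Set.Icc_subset_Icc hs.1.le le_rfl
    · exact ContinuousOn.stronglyMeasurableAtFilter isOpen_Ioo
        (hGcont.mono Set.Ioo_subset_Icc_self) s hs
    · exact hGcont.continuousAt (Icc_mem_nhds hs.1 hs.2)
  set GV := gradient V x with hGV
  set LV := spatialLaplacian V x with hLV
  -- constancy of the equation in s
  have hconst : ∀ a ∈ Set.Ioo sl sb,
      (-(∫ τ in a..sb, ℓ τ) + LV)
        + a ^ 2 * ⟪-(∫ τ in a..sb, G τ) + GV, -(∫ τ in a..sb, G τ) + GV⟫ = ε x := by
    intro a ha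
    have h1 := heq x hx a ⟨ha.1, ha.2.le⟩
    rw [hlapv a ha.1.le ha.2.le, hgradv a ha.1.le ha.2.le] at h1
    rw [real_inner_self_eq_norm_sq]
    exact h1
  have h1 : HasDerivAt (fun a => -(∫ τ in a..sb, ℓ τ) + LV) (ℓ s) s := by
    simpa using hA.neg.add_const LV
  have h2 : HasDerivAt (fun a => -(∫ τ in a..sb, G τ) + GV) (G s) s := by
    simpa using hB.neg.add_const GV
  have h3 := HasDerivAt.inner (𝕜 := ℝ) h2 h2
  have h4 : HasDerivAt (fun a : ℝ => a ^ 2) (2 * s) s := by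
    simpa using hasDerivAt_pow 2 s
  have hΦ := h1.add (h4.mul h3)
  have hzero : HasDerivAt (fun a => (-(∫ τ in a..sb, ℓ τ) + LV)
      + a ^ 2 * ⟪-(∫ τ in a..sb, G τ) + GV, -(∫ τ in a..sb, G τ) + GV⟫) 0 s := by
    refine (hasDerivAt_const s (ε x)).congr_of_eventuallyEq ?_
    filter_upwards [isOpen_Ioo.mem_nhds hs] with a ha
    exact hconst a ha
  have key := hΦ.unique hzero
  -- conclude
  have e1 : spatialLaplacian (fun y => q y s) x = ℓ s := hℓlap s hsmem
  have e2 : gradient (fun y => q y s) x = G s := rfl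
  have e3 : (∫ τ in s..sb, gradient (fun y => q y τ) x) = ∫ τ in s..sb, G τ := rfl
  rw [e1, e2, e3]
  set b := ∫ τ in s..sb, G τ with hbdef
  simp only [inner_add_left, inner_add_right, inner_neg_left, inner_neg_right] at key
  rw [← real_inner_self_eq_norm_sq, ← real_inner_self_eq_norm_sq]
  have c1 : ⟪b, G s⟫ = ⟪G s, b⟫ := real_inner_comm _ _
  have c2 : ⟪b, GV⟫ = ⟪GV, b⟫ := real_inner_comm _ _
  have c3 : ⟪G s, GV⟫ = ⟪GV, G s⟫ := real_inner_comm _ _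
  linear_combination key + s ^ 2 * c1 - s ^ 2 * c3 + 2 * s * c2
end

section
/- Let H be a real normed vector space, V ⊆ H a subspace, and F : H → ℝ twice Fréchet differentiable. Let ε ∈ H and ε_h ∈ V, and suppose: (i) the Galerkin orthogonality F'(ε_h)(v) = 0 holds for all v ∈ V; (ii) ε_I ∈ V (an interpolant of ε); (iii) there is M ≥ 0 such that ‖F''(x)‖ ≤ M for all x on the segment joining ε_h and ε. Then the error in the functional satisfies |F(ε) − F(ε_h) − F'(ε_h)(ε − ε_I)| ≤ (M/2)·‖ε − ε_h‖². In particular, up to the second order remainder R(ε, ε_h) with |R(ε, ε_h)| ≤ (M/2)‖ε − ε_h‖², one has the error representation F(ε) − F(ε_h) ≈ F'(ε_h)(ε − ε_I). -/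
/-- A posteriori error representation for the Tikhonov functional: if `F` is twice
Fréchet differentiable, `ε_h ∈ V` satisfies the Galerkin orthogonality
`F'(ε_h)(v) = 0` for all `v ∈ V`, `ε_I ∈ V` is an interpolant of `ε`, and
`‖F''‖ ≤ M` on the segment joining `ε_h` and `ε`, then
`|F(ε) − F(ε_h) − F'(ε_h)(ε − ε_I)| ≤ (M/2)·‖ε − ε_h‖²`. -/
theorem error_representation_tikhonov_functional
    {H : Type*} [NormedAddCommGroup H] [NormedSpace ℝ H]
    (V : Submodule ℝ H) (F : H → ℝ) (hF : ContDiff ℝ 2 F)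
    (ε ε_h ε_I : H) (hεh : ε_h ∈ V) (hεI : ε_I ∈ V)
    (hGal : ∀ v ∈ V, fderiv ℝ F ε_h v = 0)
    (M : ℝ) (hM0 : 0 ≤ M)
    (hM : ∀ x ∈ segment ℝ ε_h ε, ‖fderiv ℝ (fderiv ℝ F) x‖ ≤ M) :
    |F ε - F ε_h - fderiv ℝ F ε_h (ε - ε_I)| ≤ (M / 2) * ‖ε - ε_h‖ ^ 2 := by
  set v : H := ε - ε_h with hv
  -- reduce the interpolant term to `v` using Galerkin orthogonality
  have hkey : fderiv ℝ F ε_h (ε - ε_I) = fderiv ℝ F ε_h v := by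
    have h1 : (ε - ε_I) = v + (ε_h - ε_I) := by rw [hv]; abel
    rw [h1, map_add, hGal _ (sub_mem hεh hεI), add_zero]
  rw [hkey]
  -- setup: the segment parametrization
  set γ : ℝ → H := fun t => ε_h + t • v with hγdef
  have hγseg : ∀ t ∈ Set.Icc (0:ℝ) 1, γ t ∈ segment ℝ ε_h ε := by
    intro t ht
    refine ⟨1 - t, t, by linarith [ht.2], ht.1, by ring, ?_⟩
    simp only [hγdef, hv]
    module
  have hFd : Differentiable ℝ F := hF.differentiable (by norm_num)
  have hF'd : Differentiable ℝ (fderiv ℝ F) :=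
    (hF.fderiv_right (m := 1) (by norm_num)).differentiable (by norm_num)
  have hγd : ∀ t : ℝ, HasDerivAt γ v t := by
    intro t
    simpa [hγdef] using ((hasDerivAt_id t).smul_const v).const_add ε_h
  -- g t = F (γ t), g1 t = F'(γ t) v
  set g : ℝ → ℝ := fun t => F (γ t) with hgdef
  set g1 : ℝ → ℝ := fun t => fderiv ℝ F (γ t) v with hg1def
  have hg : ∀ t : ℝ, HasDerivAt g (g1 t) t := fun t =>
    (hFd (γ t)).hasFDerivAt.comp_hasDerivAt t (hγd t)
  have hg1 : ∀ t : ℝ, HasDerivAt g1 (fderiv ℝ (fderiv ℝ F) (γ t) v v) t := by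
    intro t
    have h1 : HasDerivAt (fun t => fderiv ℝ F (γ t)) (fderiv ℝ (fderiv ℝ F) (γ t) v) t :=
      (hF'd (γ t)).hasFDerivAt.comp_hasDerivAt t (hγd t)
    exact (ContinuousLinearMap.apply ℝ ℝ v).hasFDerivAt.comp_hasDerivAt t h1
  -- mean value bound for g1 on [0,1]
  have hC : ∀ s ∈ Set.Icc (0:ℝ) 1, ‖fderiv ℝ (fderiv ℝ F) (γ s) v v‖ ≤ M * ‖v‖ ^ 2 := by
    intro s hs
    calc ‖fderiv ℝ (fderiv ℝ F) (γ s) v v‖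
        ≤ ‖fderiv ℝ (fderiv ℝ F) (γ s) v‖ * ‖v‖ :=
          (fderiv ℝ (fderiv ℝ F) (γ s) v).le_opNorm v
      _ ≤ ‖fderiv ℝ (fderiv ℝ F) (γ s)‖ * ‖v‖ * ‖v‖ := by
          gcongr
          exact (fderiv ℝ (fderiv ℝ F) (γ s)).le_opNorm v
      _ ≤ M * ‖v‖ * ‖v‖ := by gcongr; exact hM _ (hγseg s hs)
      _ = M * ‖v‖ ^ 2 := by ring
  have hg1bound : ∀ t ∈ Set.Icc (0:ℝ) 1, ‖g1 t - g1 0‖ ≤ M * ‖v‖ ^ 2 * (t - 0) :=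
    norm_image_sub_le_of_norm_deriv_le_segment'
      (fun s _ => (hg1 s).hasDerivWithinAt) (fun s hs => hC s ⟨hs.1, hs.2.le⟩)
  -- fencing argument: f t = g t - g 0 - t * g1 0, B t = (M‖v‖²/2) t²
  set f : ℝ → ℝ := fun t => g t - g 0 - t * g1 0 with hfdef
  have hfderiv : ∀ t : ℝ, HasDerivAt f (g1 t - g1 0) t := by
    intro t
    have := ((hg t).sub_const (g 0)).sub (((hasDerivAt_id t).mul_const (g1 0)))
    exact this.congr_deriv (by simp)
  set B : ℝ → ℝ := fun t => M * ‖v‖ ^ 2 / 2 * t ^ 2 with hBdef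
  have hB : ∀ t : ℝ, HasDerivAt B (M * ‖v‖ ^ 2 * t) t := by
    intro t
    have := (hasDerivAt_pow 2 t).const_mul (M * ‖v‖ ^ 2 / 2)
    exact this.congr_deriv (by ring)
  have hmain : ∀ x ∈ Set.Icc (0:ℝ) 1, ‖f x‖ ≤ B x := by
    refine image_norm_le_of_norm_deriv_right_le_deriv_boundary
      (f' := fun t => g1 t - g1 0)
      (fun t _ => (hfderiv t).continuousAt.continuousWithinAt)
      (fun t _ => (hfderiv t).hasDerivWithinAt) ?_ hB ?_
    · simp [hfdef, hBdef]
    · intro t ht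
      have := hg1bound t ⟨ht.1, ht.2.le⟩
      simpa using this
  have h1 : ‖f 1‖ ≤ M * ‖v‖ ^ 2 / 2 := by
    have := hmain 1 ⟨zero_le_one, le_refl 1⟩
    simpa [hBdef] using this
  have hγ0 : γ 0 = ε_h := by simp [hγdef]
  have hγ1 : γ 1 = ε := by simp [hγdef, hv]
  have hf1 : f 1 = F ε - F ε_h - fderiv ℝ F ε_h v := by
    simp [hfdef, hgdef, hg1def, hγ0, hγ1]
  rw [← Real.norm_eq_abs]
  calc ‖F ε - F ε_h - fderiv ℝ F ε_h v‖ = ‖f 1‖ := by rw [hf1]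
    _ ≤ M * ‖v‖ ^ 2 / 2 := h1
    _ = M / 2 * ‖ε - ε_h‖ ^ 2 := by rw [hv]; ring
end
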